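/- Let u : ℕ → A be a sequence such that for every even index i the entry u i lies in the right copy ω₁ and is not the least element of ω₁, and for every odd index i the entry u i lies in the left copy ω₁* and is not the greatest element of ω₁*. Then for every a ∈ A, the sequence u is not 2-tail-equivalent to the sequence a::u; equivalently, the 2-tail-equivalence classes [u]₂ and [a::u]₂ are disjoint. -/

import Mathlib

open Ordinal

/-- `A = ω₁* + ω₁`. -/
abbrev A : Type := Lex ((Ordinal.ToType ω₁)ᵒᵈ ⊕ Ordinal.ToType ω₁)

/-- The sequence with first entry `a` followed by the entries of `u`. -/
def consSeq {α : Type*} (a : α) (u : ℕ → α) : ℕ → α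
  | 0 => a
  | n + 1 => u n

/-- The sequence obtained by prepending the finite list `r` to the sequence `u`. -/
def appendSeq {α : Type*} : List α → (ℕ → α) → ℕ → α
  | [], u => u
  | a :: r, u => consSeq a (appendSeq r u)

theorem appendSeq_apply {α : Type*} (r : List α) (w : ℕ → α) (n : ℕ) :
    appendSeq r w (n + r.length) = w n := by
  induction r with
  | nil => rfl
  | cons a r ih =>
      show appendSeq r w (n + r.length) = w n
      exact ih

/-- If `u : ℕ → A` has even entries in the right copy of `ω₁` (not its least
element) and odd entries in the left copy `ω₁*` (not its greatest element),
then for every `a : A` the sequences `u` and `a::u` are not 2-tail-equivalent. -/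
theorem not_two_tail_equivalent_cons (u : ℕ → A)
    (heven : ∀ i : ℕ, Even i →
      ∃ α : Ordinal.ToType ω₁, ¬ IsMin α ∧ u i = toLex (Sum.inr α))
    (hodd : ∀ i : ℕ, Odd i →
      ∃ β : (Ordinal.ToType ω₁)ᵒᵈ, ¬ IsMax β ∧ u i = toLex (Sum.inl β))
    (a : A) :
    ¬ ∃ (r s : List A) (w : ℕ → A), r.length % 2 = s.length % 2 ∧
        u = appendSeq r w ∧ consSeq a u = appendSeq s w := by
  rintro ⟨r, s, w, hpar, hu, hcons⟩
  have h1 : ∀ n, u (n + r.length) = w n := fun n => by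
    rw [hu]; exact appendSeq_apply r w n
  have h2 : ∀ n, consSeq a u (n + s.length) = w n := fun n => by
    rw [hcons]; exact appendSeq_apply s w n
  cases hs : s.length with
  | zero =>
      -- then u (1 + r.length) = u 0, with 1 + r.length odd
      have hr2 : r.length % 2 = 0 := by rw [hpar, hs]
      have key : u (1 + r.length) = u 0 := by
        have := (h1 1).trans (h2 1).symm
        rw [hs] at this
        exact this
      obtain ⟨α, -, hα⟩ := heven 0 (by decide)
      obtain ⟨β, -, hβ⟩ := hodd (1 + r.length) (Nat.odd_iff.mpr (by omega))
      rw [hα, hβ] at key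
      exact absurd (toLex.injective key) (by simp)
  | succ m =>
      -- then u (r.length) = u m, with r.length and m of opposite parity
      have hr2 : r.length % 2 = (m + 1) % 2 := by rw [hpar, hs]
      have key : u r.length = u m := by
        have := (h1 0).trans (h2 0).symm
        rw [hs] at this
        simpa [consSeq] using this
      rcases Nat.even_or_odd r.length with he | ho
      · obtain ⟨α, -, hα⟩ := heven r.length he
        obtain ⟨β, -, hβ⟩ := hodd m (Nat.odd_iff.mpr (by
          have := Nat.even_iff.mp he; omega))
        rw [hα, hβ] at key
        exact absurd (toLex.injective key) (by simp)
      · obtain ⟨β, -, hβ⟩ := hodd r.length ho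
        obtain ⟨α, -, hα⟩ := heven m (Nat.even_iff.mpr (by
          have := Nat.odd_iff.mp ho; omega))
        rw [hβ, hα] at key
        exact absurd (toLex.injective key) (by simp)
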